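/- Let q ≥ 1 be an integer and let g : ℝ → ℝ be real-analytic on a neighbourhood of 0 with g(0) = 0 and g not identically zero on any neighbourhood of 0. Define φ(t) = g(t^{1/q}) for t ≥ 0 small. Then there exist constants ρ > 0, c > 0 and θ ∈ (0, 1) such that φ is differentiable on (0, ρ) and |φ′(t)| ≥ c · |φ(t)|^θ for all t ∈ (0, ρ). -/

import Mathlib

open Metric Set Filter Topology

/-- asymptotic Łojasiewicz gradient inequality in one variable for a
Puiseux-type function `φ(t) = g(t^{1/q})`, where `g` is real-analytic near `0`,
vanishes at `0` and is not identically zero near `0`: there are `ρ, c > 0` and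
`θ ∈ (0,1)` such that `φ` is differentiable on `(0, ρ)` and
`|φ′(t)| ≥ c·|φ(t)|^θ` there. -/
theorem puiseux_gradient_inequality
    (q : ℕ) (hq : 1 ≤ q) (g : ℝ → ℝ)
    (hg : ∃ U ∈ 𝓝 (0:ℝ), AnalyticOnNhd ℝ g U)
    (hg0 : g 0 = 0)
    (hgne : ∀ U ∈ 𝓝 (0:ℝ), ∃ t ∈ U, g t ≠ 0)
    (φ : ℝ → ℝ) (hφ : ∀ t : ℝ, 0 ≤ t → φ t = g (t ^ ((q : ℝ))⁻¹)) :
    ∃ ρ > (0:ℝ), ∃ c > (0:ℝ), ∃ θ ∈ Set.Ioo (0:ℝ) 1,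
      ∀ t ∈ Set.Ioo (0:ℝ) ρ,
        DifferentiableAt ℝ φ t ∧ |deriv φ t| ≥ c * |φ t| ^ θ := by
  classical
  obtain ⟨U, hU, hAn⟩ := hg
  have hA : AnalyticAt ℝ g 0 := hAn 0 (mem_of_mem_nhds hU)
  have hne : ¬ ∀ᶠ x in 𝓝 (0:ℝ), g x = 0 := by
    intro h
    obtain ⟨t, ht, hgt⟩ := hgne {x | g x = 0} h
    exact hgt ht
  have hord : analyticOrderAt g 0 ≠ ⊤ := fun h => hne (analyticOrderAt_eq_top.mp h)
  obtain ⟨n, hn⟩ := WithTop.ne_top_iff_exists.mp hord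
  obtain ⟨h, hhA, hh0, heq⟩ := (hA.analyticOrderAt_eq_natCast (n := n)).mp hn.symm
  have heq' : ∀ᶠ x in 𝓝 (0:ℝ), g x = x ^ n * h x := by simpa using heq
  -- n ≥ 1
  have hn1 : 1 ≤ n := by
    by_contra hc
    have hn0 : n = 0 := by omega
    have := heq'.self_of_nhds
    rw [hn0, hg0] at this
    simp at this
    exact hh0 this.symm
  -- derivative of h is continuous near 0
  obtain ⟨r, hr0, hrA⟩ := Metric.eventually_nhds_iff_ball.mp hhA.eventually_analyticAt
  have hAO : AnalyticOnNhd ℝ h (ball (0:ℝ) r) := fun y hy => hrA y hy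
  have hdA : AnalyticOnNhd ℝ (deriv h) (ball (0:ℝ) r) := hAO.deriv
  have hdC : ContinuousAt (deriv h) 0 :=
    (hdA 0 (mem_ball_self hr0)).continuousAt
  set H0 : ℝ := |h 0| with hH0
  have hH0pos : 0 < H0 := abs_pos.mpr hh0
  set F : ℝ → ℝ := fun x => (n : ℝ) * h x + x * deriv h x with hF
  have hFC : ContinuousAt F 0 := by
    apply ContinuousAt.add
    · exact continuousAt_const.mul hhA.continuousAt
    · exact continuousAt_id.mul hdC
  have hF0 : |F 0| = (n : ℝ) * H0 := by
    simp [hF, abs_mul, Nat.abs_cast, hH0]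
  have hnpos : (0:ℝ) < (n:ℝ) := by exact_mod_cast hn1
  have hE3 : ∀ᶠ x in 𝓝 (0:ℝ), (n : ℝ) * H0 / 2 < |F x| := by
    apply Filter.Tendsto.eventually_const_lt _ (hFC.abs.tendsto)
    rw [hF0]
    nlinarith
  have hE4 : ∀ᶠ x in 𝓝 (0:ℝ), |h x| < 2 * H0 := by
    apply Filter.Tendsto.eventually_lt_const _ (hhA.continuousAt.abs.tendsto)
    nlinarith
  have hE2 : ∀ᶠ x in 𝓝 (0:ℝ), AnalyticAt ℝ h x := hhA.eventually_analyticAt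
  obtain ⟨δ₀, hδ₀, hδball⟩ := Metric.eventually_nhds_iff_ball.mp
    ((heq'.and hE3).and (hE4.and hE2))
  set δ : ℝ := min δ₀ 1 with hδdef
  have hδpos : 0 < δ := lt_min hδ₀ one_pos
  have hδ1 : δ ≤ 1 := min_le_right _ _
  have hqpos : (0:ℝ) < (q:ℝ) := by exact_mod_cast hq
  -- choose θ and c
  set θ : ℝ := max (1/2) (1 - (q:ℝ) / (2 * n)) with hθdef
  have hθmem : θ ∈ Set.Ioo (0:ℝ) 1 := by
    constructor
    · have : (0:ℝ) < 1/2 := by norm_num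
      exact lt_of_lt_of_le this (le_max_left _ _)
    · apply max_lt
      · norm_num
      · have : 0 < (q:ℝ) / (2*n) := by positivity
        linarith
  have hθexp : (n:ℝ) - q ≤ (n:ℝ) * θ := by
    have h1 : 1 - (q:ℝ) / (2 * n) ≤ θ := le_max_right _ _
    have h2 : (n:ℝ) * (1 - (q:ℝ) / (2*n)) = (n:ℝ) - q/2 := by
      field_simp
    nlinarith
  have hθ0 : 0 ≤ θ := hθmem.1.le
  set c : ℝ := ((q:ℝ)⁻¹ * ((n:ℝ) * H0 / 2)) / (2 * H0) ^ θ with hcdef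
  have h2H0 : (0:ℝ) < 2 * H0 := by linarith
  have hcpos : 0 < c := by
    apply div_pos
    · positivity
    · exact Real.rpow_pos_of_pos h2H0 θ
  refine ⟨δ ^ q, pow_pos hδpos q, c, hcpos, θ, hθmem, ?_⟩
  intro t ht
  obtain ⟨ht0, htρ⟩ := ht
  set s : ℝ := t ^ ((q:ℝ))⁻¹ with hsdef
  have hs0 : 0 < s := Real.rpow_pos_of_pos ht0 _
  have hsq : s ^ q = t := Real.rpow_inv_natCast_pow ht0.le (by omega)
  have hsδ : s < δ := by
    by_contra hc
    push_neg at hc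
    have : δ ^ q ≤ s ^ q := pow_le_pow_left₀ hδpos.le hc q
    rw [hsq] at this
    linarith
  have hsball₀ : s ∈ ball (0:ℝ) δ₀ := by
    rw [mem_ball, Real.dist_eq, sub_zero, abs_of_pos hs0]
    exact lt_of_lt_of_le hsδ (min_le_left _ _)
  obtain ⟨⟨hgs, hFs⟩, hhs, hhAs⟩ := hδball s hsball₀
  have hs1 : s ≤ 1 := le_of_lt (lt_of_lt_of_le hsδ hδ1)
  -- derivative of g at s
  have hgeq : g =ᶠ[𝓝 s] fun x => x ^ n * h x := by
    apply Filter.eventuallyEq_of_mem (isOpen_ball.mem_nhds hsball₀)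
    intro x hx
    exact ((hδball x hx).1).1
  have hdh : HasDerivAt h (deriv h s) s := hhAs.differentiableAt.hasDerivAt
  have hGd : HasDerivAt (fun x => x ^ n * h x)
      ((n:ℝ) * s ^ (n - 1) * h s + s ^ n * deriv h s) s :=
    (hasDerivAt_pow n s).mul hdh
  have hgd : HasDerivAt g ((n:ℝ) * s ^ (n - 1) * h s + s ^ n * deriv h s) s :=
    hGd.congr_of_eventuallyEq hgeq
  -- derivative of the rpow map at t
  have hrd : HasDerivAt (fun x : ℝ => x ^ ((q:ℝ))⁻¹)
      (((q:ℝ))⁻¹ * t ^ (((q:ℝ))⁻¹ - 1)) t :=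
    Real.hasDerivAt_rpow_const (Or.inl ht0.ne')
  have hcomp : HasDerivAt (fun x : ℝ => g (x ^ ((q:ℝ))⁻¹))
      (((n:ℝ) * s ^ (n - 1) * h s + s ^ n * deriv h s)
        * (((q:ℝ))⁻¹ * t ^ (((q:ℝ))⁻¹ - 1))) t := hgd.comp t hrd
  have hφeq : φ =ᶠ[𝓝 t] fun x : ℝ => g (x ^ ((q:ℝ))⁻¹) := by
    apply Filter.eventuallyEq_of_mem (isOpen_Ioi.mem_nhds ht0)
    intro x hx
    exact hφ x (le_of_lt hx)
  have hφd : HasDerivAt φ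
      (((n:ℝ) * s ^ (n - 1) * h s + s ^ n * deriv h s)
        * (((q:ℝ))⁻¹ * t ^ (((q:ℝ))⁻¹ - 1))) t :=
    hcomp.congr_of_eventuallyEq hφeq
  refine ⟨hφd.differentiableAt, ?_⟩
  rw [hφd.deriv]
  -- factor the derivative
  have hfac : (n:ℝ) * s ^ (n - 1) * h s + s ^ n * deriv h s = s ^ (n-1) * F s := by
    have : s ^ n = s ^ (n-1) * s := by
      conv_lhs => rw [show n = (n-1) + 1 by omega]
      rw [pow_succ]
    rw [this, hF]
    ring
  -- rewrite t ^ (q⁻¹ - 1) as s ^ (1 - q)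
  have hts : t = s ^ ((q:ℝ)) := by
    rw [← hsq, Real.rpow_natCast]
  have htpow : t ^ (((q:ℝ))⁻¹ - 1) = s ^ ((1:ℝ) - q) := by
    rw [hts, ← Real.rpow_mul hs0.le]
    congr 1
    field_simp
  -- |φ t| bound
  have hφt : |φ t| ≤ s ^ n * (2 * H0) := by
    rw [hφ t ht0.le, ← hsdef, hgs, abs_mul, abs_pow, abs_of_pos hs0]
    exact mul_le_mul_of_nonneg_left hhs.le (by positivity)
  -- main estimate
  have hderiv_eq : |((n:ℝ) * s ^ (n - 1) * h s + s ^ n * deriv h s)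
        * (((q:ℝ))⁻¹ * t ^ (((q:ℝ))⁻¹ - 1))|
      = s ^ (n-1) * |F s| * ((q:ℝ)⁻¹ * s ^ ((1:ℝ) - q)) := by
    rw [hfac, htpow, abs_mul, abs_mul, abs_pow, abs_of_pos hs0, abs_mul,
      abs_of_pos (by positivity : (0:ℝ) < (q:ℝ)⁻¹),
      abs_of_pos (Real.rpow_pos_of_pos hs0 _)]
  rw [ge_iff_le, hderiv_eq]
  -- combine powers: s ^ (n-1) * s ^ (1 - q) = s ^ ((n:ℝ) - q)
  have hpowcomb : s ^ (n-1) * s ^ ((1:ℝ) - q) = s ^ ((n:ℝ) - q) := by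
    rw [← Real.rpow_natCast s (n-1), ← Real.rpow_add hs0]
    congr 1
    have : ((n-1 : ℕ) : ℝ) = (n:ℝ) - 1 := by
      have := Nat.cast_sub hn1 (R := ℝ)
      simpa using this
    rw [this]
    ring
  have key : c * |φ t| ^ θ ≤ (q:ℝ)⁻¹ * ((n:ℝ) * H0 / 2) * s ^ ((n:ℝ) - q) := by
    have hb1 : |φ t| ^ θ ≤ (s ^ n * (2 * H0)) ^ θ :=
      Real.rpow_le_rpow (abs_nonneg _) hφt hθ0
    have hb2 : (s ^ n * (2 * H0)) ^ θ = s ^ ((n:ℝ) * θ) * (2 * H0) ^ θ := by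
      rw [Real.mul_rpow (by positivity) h2H0.le, ← Real.rpow_natCast s n,
        ← Real.rpow_mul hs0.le]
    have hb3 : s ^ ((n:ℝ) - q) ≥ s ^ ((n:ℝ) * θ) :=
      Real.rpow_le_rpow_of_exponent_ge hs0 hs1 hθexp
    calc c * |φ t| ^ θ ≤ c * (s ^ ((n:ℝ) * θ) * (2 * H0) ^ θ) := by
          rw [← hb2]; exact mul_le_mul_of_nonneg_left hb1 hcpos.le
      _ = (q:ℝ)⁻¹ * ((n:ℝ) * H0 / 2) * s ^ ((n:ℝ) * θ) := by
          rw [hcdef]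
          field_simp
      _ ≤ (q:ℝ)⁻¹ * ((n:ℝ) * H0 / 2) * s ^ ((n:ℝ) - q) := by
          apply mul_le_mul_of_nonneg_left hb3 (by positivity)
  refine le_trans key ?_
  calc (q:ℝ)⁻¹ * ((n:ℝ) * H0 / 2) * s ^ ((n:ℝ) - q)
      ≤ (q:ℝ)⁻¹ * |F s| * s ^ ((n:ℝ) - q) := by
        apply mul_le_mul_of_nonneg_right _ (Real.rpow_pos_of_pos hs0 _).le
        apply mul_le_mul_of_nonneg_left hFs.le (by positivity)
    _ = s ^ (n-1) * |F s| * ((q:ℝ)⁻¹ * s ^ ((1:ℝ) - q)) := by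
        rw [← hpowcomb]; ring
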